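/- Let n ≥ 1, let L₂, …, Lₙ be Kripke complete monomodal logics, and let L = T × L₂ × … × Lₙ. Then there is a function mapping each n-modal formula φ to an n-modal formula containing only the single propositional variable p, namely φ ↦ (A → σ(φ)) where A and σ are defined from φ, such that: (i) φ ∈ L if and only if A → σ(φ) ∈ L, and (ii) the length of A → σ(φ) is bounded by an exponential function of the length of φ. In other words, L is exponentially embeddable into its one-variable fragment. (Theorem 3.3) -/

import Mathlib

namespace ModalProducts

/-- `N`-modal formulas over propositional variables indexed by `ℕ`
(the variable `pₖ` is `var k`; the extra variable `p` is `var 0`). -/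
inductive MF (N : ℕ) : Type
  | var : ℕ → MF N
  | bot : MF N
  | and : MF N → MF N → MF N
  | or  : MF N → MF N → MF N
  | imp : MF N → MF N → MF N
  | box : Fin N → MF N → MF N
deriving DecidableEq

namespace MF

variable {N : ℕ}

/-- negation: `¬ψ = ψ → ⊥`. -/
def neg (φ : MF N) : MF N := imp φ bot

/-- diamond: `◇ᵢψ = ¬□ᵢ¬ψ`. -/
def dia (i : Fin N) (φ : MF N) : MF N := neg (box i (neg φ))

/-- modal depth. -/
def md : MF N → ℕ
  | var _ => 0
  | bot => 0
  | and φ ψ => max (md φ) (md ψ)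
  | or φ ψ => max (md φ) (md ψ)
  | imp φ ψ => max (md φ) (md ψ)
  | box _ φ => md φ + 1

/-- length (number of symbols; the variable `pₖ` counts as `k+1` symbols,
accounting for the subscript). -/
def len : MF N → ℕ
  | var q => q + 1
  | bot => 1
  | and φ ψ => len φ + len ψ + 1
  | or φ ψ => len φ + len ψ + 1
  | imp φ ψ => len φ + len ψ + 1
  | box _ φ => len φ + 1

/-- the set of propositional variables occurring in a formula. -/
def vars : MF N → Set ℕ
  | var q => {q}
  | bot => ∅
  | and φ ψ => vars φ ∪ vars ψ
  | or φ ψ => vars φ ∪ vars ψ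
  | imp φ ψ => vars φ ∪ vars ψ
  | box _ φ => vars φ

/-- the largest index of a variable occurring in a formula (0 if none). -/
def maxVar : MF N → ℕ
  | var q => q
  | bot => 0
  | and φ ψ => max (maxVar φ) (maxVar ψ)
  | or φ ψ => max (maxVar φ) (maxVar ψ)
  | imp φ ψ => max (maxVar φ) (maxVar ψ)
  | box _ φ => maxVar φ

/-- the list of subformulas of a formula. -/
def subfs : MF N → List (MF N)
  | var q => [var q]
  | bot => [bot]
  | and φ ψ => and φ ψ :: (subfs φ ++ subfs ψ)
  | or φ ψ => or φ ψ :: (subfs φ ++ subfs ψ)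
  | imp φ ψ => imp φ ψ :: (subfs φ ++ subfs ψ)
  | box i φ => box i φ :: subfs φ

/-- uniform substitution of formulas for variables. -/
def subst (s : ℕ → MF N) : MF N → MF N
  | var q => s q
  | bot => bot
  | and φ ψ => and (subst s φ) (subst s ψ)
  | or φ ψ => or (subst s φ) (subst s ψ)
  | imp φ ψ => imp (subst s φ) (subst s ψ)
  | box i φ => box i (subst s φ)

end MF

/-- `θ` is a subformula of `φ`. -/
def Subformula {N : ℕ} (θ φ : MF N) : Prop := θ ∈ φ.subfs

/-- A Kripke `N`-frame: a nonempty set of points with `N` accessibility relations. -/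
structure Frame (N : ℕ) where
  W : Type
  nonempty : Nonempty W
  R : Fin N → W → W → Prop

/-- Truth of a formula at a point of a frame under a valuation. -/
def Sat {N : ℕ} (F : Frame N) (v : ℕ → Set F.W) : F.W → MF N → Prop
  | x, .var q => x ∈ v q
  | _, .bot => False
  | x, .and φ ψ => Sat F v x φ ∧ Sat F v x ψ
  | x, .or φ ψ => Sat F v x φ ∨ Sat F v x ψ
  | x, .imp φ ψ => Sat F v x φ → Sat F v x ψ
  | x, .box i φ => ∀ y, F.R i x y → Sat F v y φ

/-- Validity of a formula in a frame: truth at every point under every valuation. -/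
def Valid {N : ℕ} (F : Frame N) (φ : MF N) : Prop := ∀ (v : ℕ → Set F.W) (x : F.W), Sat F v x φ

/-- A set of formulas is valid in a frame if all of its members are. -/
def ValidSet {N : ℕ} (F : Frame N) (L : Set (MF N)) : Prop := ∀ φ ∈ L, Valid F φ

/-- The logic of a class of frames. -/
def Logic {N : ℕ} (C : Set (Frame N)) : Set (MF N) := {φ | ∀ F ∈ C, Valid F φ}

/-- A logic is Kripke complete if it is the logic of some nonempty class of frames. -/
def KripkeComplete {N : ℕ} (L : Set (MF N)) : Prop :=
  ∃ C : Set (Frame N), C.Nonempty ∧ L = Logic C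

/-- The product of `N` 1-frames. -/
def prodFrame {N : ℕ} (Fs : Fin N → Frame 1) : Frame N where
  W := ∀ i, (Fs i).W
  nonempty := ⟨fun i => (Fs i).nonempty.some⟩
  R := fun i x y => (Fs i).R 0 (x i) (y i) ∧ ∀ k, k ≠ i → x k = y k

/-- The product of `N` Kripke complete monomodal logics: the logic of the class of
products of frames of the factors. -/
def productLogic {N : ℕ} (Ls : Fin N → Set (MF 1)) : Set (MF N) :=
  Logic {F | ∃ Fs : Fin N → Frame 1, (∀ i, ValidSet (Fs i) (Ls i)) ∧ F = prodFrame Fs}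

/-- A 1-frame is reflexive. -/
def ReflexiveFrame (F : Frame 1) : Prop := ∀ x, F.R 0 x x

/-- The logic `T` of all reflexive 1-frames. -/
def logicT : Set (MF 1) := Logic {F | ReflexiveFrame F}

/-- The logic `K` of all 1-frames. -/
def logicK : Set (MF 1) := Logic Set.univ

/-- The logic `S5` of all 1-frames whose relation is an equivalence. -/
def logicS5 : Set (MF 1) := Logic {F | Equivalence (F.R 0)}

section Translation

variable {n : ℕ}

/-- the variable `p`. -/
def pv : MF (n+1) := .var 0

/-- `◆₁ψ = ◇₁(¬p ∧ ◇₁(p ∧ ψ))`. -/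
def blackDia (ψ : MF (n+1)) : MF (n+1) :=
  MF.dia 0 (.and (MF.neg pv) (MF.dia 0 (.and pv ψ)))

/-- `α_k = ◆₁ᵏ □₁ p`. -/
def alphaF (k : ℕ) : MF (n+1) := blackDia^[k] (.box 0 pv)

/-- `β_k = ¬p ∧ ◇₁(p ∧ α_k)`. -/
def betaF (k : ℕ) : MF (n+1) := .and (MF.neg pv) (MF.dia 0 (.and pv (alphaF k)))

/-- `B = β_{m+1}`. -/
def Bf (m : ℕ) : MF (n+1) := betaF (m+1)

/-- The translation `σ`: `σ(p_k) = β_k`, `σ(⊥) = ⊥`, `σ` commutes with `∧, ∨, →`,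
and `σ(□ᵢψ) = □ᵢ(B → σ(ψ))`. -/
def sigmaT (m : ℕ) : MF (n+1) → MF (n+1)
  | .var k => betaF k
  | .bot => .bot
  | .and φ ψ => .and (sigmaT m φ) (sigmaT m ψ)
  | .or φ ψ => .or (sigmaT m φ) (sigmaT m ψ)
  | .imp φ ψ => .imp (sigmaT m φ) (sigmaT m ψ)
  | .box i φ => .box i (.imp (Bf m) (sigmaT m φ))

/-- conjunction of a head formula with a list of formulas. -/
def bigAnd (ψ : MF (n+1)) (l : List (MF (n+1))) : MF (n+1) := l.foldl .and ψ

/-- `□^{≤k}`: `□^{≤0}ψ = ψ`, `□^{≤k+1}ψ = □^{≤k}ψ ∧ □₁□^{≤k}ψ ∧ … ∧ □ₙ□^{≤k}ψ`. -/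
def boxLe : ℕ → MF (n+1) → MF (n+1)
  | 0, ψ => ψ
  | k+1, ψ => bigAnd (boxLe k ψ) (List.ofFn fun i : Fin (n+1) => .box i (boxLe k ψ))

/-- `□₋₁^{≤k}`: like `□^{≤k}` but using only `□₂, …, □ₙ`. -/
def boxLeTail : ℕ → MF (n+1) → MF (n+1)
  | 0, ψ => ψ
  | k+1, ψ => bigAnd (boxLeTail k ψ) (List.ofFn fun i : Fin n => .box i.succ (boxLeTail k ψ))

/-- `◇₋₁^{≤k}ψ = ¬□₋₁^{≤k}¬ψ`. -/
def diaLeTail (k : ℕ) (ψ : MF (n+1)) : MF (n+1) := MF.neg (boxLeTail k (MF.neg ψ))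

/-- `A = B ∧ □^{≤md φ}(B → □₋₁^{≤md φ}B) ∧ □^{≤md φ}(◇₋₁^{≤md φ}B → B)`. -/
def Af (m : ℕ) (φ : MF (n+1)) : MF (n+1) :=
  .and (Bf m)
    (.and (boxLe φ.md (.imp (Bf m) (boxLeTail φ.md (Bf m))))
          (boxLe φ.md (.imp (diaLeTail φ.md (Bf m)) (Bf m))))

end Translation

end ModalProducts

open ModalProducts
namespace ModalProducts

/-- bounded reachability along a step relation: `RN S k a b` iff there is an
`S`-path of length at most `k` from `a` to `b`. -/
def RN {α : Type*} (S : α → α → Prop) : ℕ → α → α → Prop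
  | 0 => Eq
  | (k+1) => fun a b => RN S k a b ∨ ∃ w, S a w ∧ RN S k w b

lemma RN_zero_iff {α : Type*} {S : α → α → Prop} {a b : α} : RN S 0 a b ↔ a = b := Iff.rfl

lemma RN_succ_iff {α : Type*} {S : α → α → Prop} {k : ℕ} {a b : α} :
    RN S (k+1) a b ↔ (RN S k a b ∨ ∃ w, S a w ∧ RN S k w b) := Iff.rfl

lemma RN.zero {α : Type*} {S : α → α → Prop} (a : α) : RN S 0 a a := rfl

lemma RN_mono_k {α : Type*} {S : α → α → Prop} {k k' : ℕ} {a b : α}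
    (h : k ≤ k') (hr : RN S k a b) : RN S k' a b := by
  induction h with
  | refl => exact hr
  | step _ ih => exact Or.inl ih

lemma RN_mono_S {α : Type*} {S S' : α → α → Prop} (hS : ∀ a b, S a b → S' a b) :
    ∀ (k : ℕ) (a b : α), RN S k a b → RN S' k a b
  | 0, _, _, h => h
  | (k+1), a, b, Or.inl h => Or.inl (RN_mono_S hS k a b h)
  | (k+1), a, b, Or.inr ⟨w, hw, h⟩ => Or.inr ⟨w, hS _ _ hw, RN_mono_S hS k w b h⟩

/-- a step along any of the relations of a frame. -/
def StepAll {N : ℕ} (F : Frame N) (a b : F.W) : Prop := ∃ i, F.R i a b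

/-- a step along one of the "tail" relations of an `(n+1)`-frame. -/
def StepTail {n : ℕ} (F : Frame (n+1)) (a b : F.W) : Prop := ∃ i : Fin n, F.R i.succ a b

lemma Sat_neg {N : ℕ} {F : Frame N} {v : ℕ → Set F.W} {x : F.W} {φ : MF N} :
    Sat F v x (MF.neg φ) ↔ ¬ Sat F v x φ := Iff.rfl

lemma Sat_dia {N : ℕ} {F : Frame N} {v : ℕ → Set F.W} {x : F.W} {i : Fin N} {φ : MF N} :
    Sat F v x (MF.dia i φ) ↔ ∃ y, F.R i x y ∧ Sat F v y φ := by
  show ((∀ y, F.R i x y → (Sat F v y φ → False)) → False) ↔ _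
  constructor
  · intro h
    by_contra hc
    push_neg at hc
    exact h fun y hr hs => hc y hr hs
  · rintro ⟨y, hr, hs⟩ h
    exact h y hr hs

lemma Sat_bigAnd {n : ℕ} {F : Frame (n+1)} {v : ℕ → Set F.W} {x : F.W}
    (l : List (MF (n+1))) : ∀ (ψ : MF (n+1)),
    Sat F v x (bigAnd ψ l) ↔ (Sat F v x ψ ∧ ∀ χ ∈ l, Sat F v x χ) := by
  induction l with
  | nil => intro ψ; simp [bigAnd]
  | cons a l ih =>
    intro ψ
    have h := ih (ψ.and a)
    simp only [bigAnd, List.foldl_cons] at h ⊢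
    rw [h]
    show (Sat F v x ψ ∧ Sat F v x a) ∧ _ ↔ _
    constructor
    · rintro ⟨⟨h1, h2⟩, h3⟩
      refine ⟨h1, ?_⟩
      intro χ hχ
      rcases List.mem_cons.1 hχ with rfl | hχ
      · exact h2
      · exact h3 χ hχ
    · rintro ⟨h1, h2⟩
      exact ⟨⟨h1, h2 a (List.mem_cons_self)⟩, fun χ hχ => h2 χ (List.mem_cons_of_mem a hχ)⟩

lemma Sat_boxLe {n : ℕ} {F : Frame (n+1)} {v : ℕ → Set F.W} {ψ : MF (n+1)} :
    ∀ (k : ℕ) (x : F.W),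
    Sat F v x (boxLe k ψ) ↔ ∀ y, RN (StepAll F) k x y → Sat F v y ψ := by
  intro k
  induction k with
  | zero =>
    intro x
    constructor
    · intro h y hy
      exact (RN_zero_iff.1 hy) ▸ h
    · intro h
      exact h x rfl
  | succ k ih =>
    intro x
    rw [boxLe, Sat_bigAnd]
    constructor
    · rintro ⟨h1, h2⟩ y hy
      rcases RN_succ_iff.1 hy with hy | ⟨w, ⟨i, hw⟩, hwy⟩
      · exact (ih x).1 h1 y hy
      · have hm : (MF.box i (boxLe k ψ)) ∈ List.ofFn
            (fun i : Fin (n+1) => MF.box i (boxLe k ψ)) :=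
          List.mem_ofFn.2 ⟨i, rfl⟩
        exact (ih w).1 (h2 _ hm w hw) y hwy
    · intro h
      refine ⟨(ih x).2 (fun y hy => h y (Or.inl hy)), ?_⟩
      intro χ hχ
      simp only [List.mem_ofFn] at hχ
      obtain ⟨i, rfl⟩ := hχ
      intro w hw
      exact (ih w).2 (fun y hy => h y (Or.inr ⟨w, ⟨i, hw⟩, hy⟩))

lemma Sat_boxLeTail {n : ℕ} {F : Frame (n+1)} {v : ℕ → Set F.W} {ψ : MF (n+1)} :
    ∀ (k : ℕ) (x : F.W),
    Sat F v x (boxLeTail k ψ) ↔ ∀ y, RN (StepTail F) k x y → Sat F v y ψ := by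
  intro k
  induction k with
  | zero =>
    intro x
    constructor
    · intro h y hy
      exact (RN_zero_iff.1 hy) ▸ h
    · intro h
      exact h x rfl
  | succ k ih =>
    intro x
    rw [boxLeTail, Sat_bigAnd]
    constructor
    · rintro ⟨h1, h2⟩ y hy
      rcases RN_succ_iff.1 hy with hy | ⟨w, ⟨i, hw⟩, hwy⟩
      · exact (ih x).1 h1 y hy
      · have hm : (MF.box i.succ (boxLeTail k ψ)) ∈ List.ofFn
            (fun i : Fin n => MF.box i.succ (boxLeTail k ψ)) :=
          List.mem_ofFn.2 ⟨i, rfl⟩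
        exact (ih w).1 (h2 _ hm w hw) y hwy
    · intro h
      refine ⟨(ih x).2 (fun y hy => h y (Or.inl hy)), ?_⟩
      intro χ hχ
      simp only [List.mem_ofFn] at hχ
      obtain ⟨i, rfl⟩ := hχ
      intro w hw
      exact (ih w).2 (fun y hy => h y (Or.inr ⟨w, ⟨i, hw⟩, hy⟩))

lemma Sat_diaLeTail {n : ℕ} {F : Frame (n+1)} {v : ℕ → Set F.W} {ψ : MF (n+1)}
    {k : ℕ} {x : F.W} :
    Sat F v x (diaLeTail k ψ) ↔ ∃ y, RN (StepTail F) k x y ∧ Sat F v y ψ := by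
  rw [diaLeTail, Sat_neg, Sat_boxLeTail]
  push_neg
  simp only [Sat_neg, not_not]

end ModalProducts
namespace ModalProducts

variable {n : ℕ}

lemma alphaF_zero : (alphaF 0 : MF (n+1)) = .box 0 pv := rfl

lemma alphaF_succ (k : ℕ) : (alphaF (k+1) : MF (n+1)) = blackDia (alphaF k) := by
  rw [alphaF, Function.iterate_succ_apply', ← alphaF]

/-! vars lemmas -/

lemma vars_and' (a b : MF (n+1)) : (MF.and a b).vars = a.vars ∪ b.vars := rfl
lemma vars_or' (a b : MF (n+1)) : (MF.or a b).vars = a.vars ∪ b.vars := rfl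
lemma vars_imp' (a b : MF (n+1)) : (MF.imp a b).vars = a.vars ∪ b.vars := rfl
lemma vars_box' (i : Fin (n+1)) (a : MF (n+1)) : (MF.box i a).vars = a.vars := rfl
lemma vars_bot' : (MF.bot : MF (n+1)).vars = ∅ := rfl
lemma vars_var' (q : ℕ) : (MF.var q : MF (n+1)).vars = {q} := rfl

lemma vars_pv : (pv : MF (n+1)).vars ⊆ {0} := by
  rw [pv, vars_var']

lemma vars_neg' {s : Set ℕ} {a : MF (n+1)} (h : a.vars ⊆ s) : (MF.neg a).vars ⊆ s := by
  rw [MF.neg, vars_imp', vars_bot']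
  exact Set.union_subset h (Set.empty_subset s)

lemma vars_dia' {s : Set ℕ} {i : Fin (n+1)} {a : MF (n+1)} (h : a.vars ⊆ s) :
    (MF.dia i a).vars ⊆ s := by
  rw [MF.dia]
  exact vars_neg' (by rw [vars_box']; exact vars_neg' h)

lemma vars_blackDia {ψ : MF (n+1)} (h : ψ.vars ⊆ {0}) : (blackDia ψ).vars ⊆ {0} := by
  rw [blackDia]
  refine vars_dia' ?_
  rw [vars_and']
  exact Set.union_subset (vars_neg' vars_pv)
    (vars_dia' (by rw [vars_and']; exact Set.union_subset vars_pv h))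

lemma vars_alphaF (k : ℕ) : (alphaF k : MF (n+1)).vars ⊆ {0} := by
  induction k with
  | zero => rw [alphaF_zero, vars_box']; exact vars_pv
  | succ k ih => rw [alphaF_succ]; exact vars_blackDia ih

lemma vars_betaF (k : ℕ) : (betaF k : MF (n+1)).vars ⊆ {0} := by
  rw [betaF, vars_and']
  exact Set.union_subset (vars_neg' vars_pv)
    (vars_dia' (by rw [vars_and']; exact Set.union_subset vars_pv (vars_alphaF k)))

lemma vars_Bf (m : ℕ) : (Bf m : MF (n+1)).vars ⊆ {0} := vars_betaF (m+1)

lemma vars_sigmaT (m : ℕ) : ∀ ψ : MF (n+1), (sigmaT m ψ).vars ⊆ {0}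
  | .var k => vars_betaF k
  | .bot => by rw [sigmaT, vars_bot']; exact Set.empty_subset _
  | .and φ ψ => by
      rw [sigmaT, vars_and']
      exact Set.union_subset (vars_sigmaT m φ) (vars_sigmaT m ψ)
  | .or φ ψ => by
      rw [sigmaT, vars_or']
      exact Set.union_subset (vars_sigmaT m φ) (vars_sigmaT m ψ)
  | .imp φ ψ => by
      rw [sigmaT, vars_imp']
      exact Set.union_subset (vars_sigmaT m φ) (vars_sigmaT m ψ)
  | .box i φ => by
      rw [sigmaT, vars_box', vars_imp']
      exact Set.union_subset (vars_Bf m) (vars_sigmaT m φ)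

lemma vars_bigAnd {s : Set ℕ} (l : List (MF (n+1))) : ∀ (ψ : MF (n+1)),
    ψ.vars ⊆ s → (∀ χ ∈ l, MF.vars χ ⊆ s) → (bigAnd ψ l).vars ⊆ s := by
  induction l with
  | nil => intro ψ hψ _; exact hψ
  | cons a l ih =>
    intro ψ hψ hl
    have h : (ψ.and a).vars ⊆ s := by
      rw [vars_and']
      exact Set.union_subset hψ (hl a (List.mem_cons_self))
    exact ih (ψ.and a) h (fun χ hχ => hl χ (List.mem_cons_of_mem a hχ))

lemma vars_boxLe {s : Set ℕ} {ψ : MF (n+1)} (hψ : ψ.vars ⊆ s) :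
    ∀ k, (boxLe k ψ).vars ⊆ s := by
  intro k
  induction k with
  | zero => exact hψ
  | succ k ih =>
    rw [boxLe]
    refine vars_bigAnd _ _ ih ?_
    intro χ hχ
    rcases List.mem_ofFn.1 hχ with ⟨i, rfl⟩
    rw [vars_box']
    exact ih

lemma vars_boxLeTail {s : Set ℕ} {ψ : MF (n+1)} (hψ : ψ.vars ⊆ s) :
    ∀ k, (boxLeTail k ψ).vars ⊆ s := by
  intro k
  induction k with
  | zero => exact hψ
  | succ k ih =>
    rw [boxLeTail]
    refine vars_bigAnd _ _ ih ?_
    intro χ hχ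
    rcases List.mem_ofFn.1 hχ with ⟨i, rfl⟩
    rw [vars_box']
    exact ih

lemma vars_Af (m : ℕ) (φ : MF (n+1)) : (Af m φ).vars ⊆ {0} := by
  have hB := vars_Bf (n := n) m
  rw [Af, vars_and', vars_and']
  refine Set.union_subset hB (Set.union_subset ?_ ?_)
  · refine vars_boxLe ?_ _
    rw [vars_imp']
    exact Set.union_subset hB (vars_boxLeTail hB _)
  · refine vars_boxLe ?_ _
    rw [vars_imp']
    refine Set.union_subset ?_ hB
    rw [diaLeTail]
    exact vars_neg' (vars_boxLeTail (vars_neg' hB) _)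

lemma vars_final (m : ℕ) (φ : MF (n+1)) :
    (MF.imp (Af m φ) (sigmaT m φ)).vars ⊆ {0} := by
  rw [vars_imp']
  exact Set.union_subset (vars_Af m φ) (vars_sigmaT m φ)

end ModalProducts
namespace ModalProducts

variable {n : ℕ}

/-! length lemmas -/

lemma len_pos : ∀ ψ : MF (n+1), 1 ≤ ψ.len
  | .var q => Nat.le_add_left 1 q
  | .bot => le_refl 1
  | .and a b => by rw [MF.len]; omega
  | .or a b => by rw [MF.len]; omega
  | .imp a b => by rw [MF.len]; omega
  | .box i a => by rw [MF.len]; omega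

lemma maxVar_lt_len : ∀ ψ : MF (n+1), ψ.maxVar + 1 ≤ ψ.len
  | .var q => le_refl _
  | .bot => le_refl 1
  | .and a b => by
      rw [MF.maxVar, MF.len]
      have := maxVar_lt_len a; have := maxVar_lt_len b; omega
  | .or a b => by
      rw [MF.maxVar, MF.len]
      have := maxVar_lt_len a; have := maxVar_lt_len b; omega
  | .imp a b => by
      rw [MF.maxVar, MF.len]
      have := maxVar_lt_len a; have := maxVar_lt_len b; omega
  | .box i a => by
      rw [MF.maxVar, MF.len]
      have := maxVar_lt_len a; omega

lemma md_le_len : ∀ ψ : MF (n+1), ψ.md ≤ ψ.len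
  | .var q => Nat.zero_le _
  | .bot => Nat.zero_le _
  | .and a b => by
      rw [MF.md, MF.len]
      have := md_le_len a; have := md_le_len b; omega
  | .or a b => by
      rw [MF.md, MF.len]
      have := md_le_len a; have := md_le_len b; omega
  | .imp a b => by
      rw [MF.md, MF.len]
      have := md_le_len a; have := md_le_len b; omega
  | .box i a => by
      rw [MF.md, MF.len]
      have := md_le_len a; omega

lemma mem_vars_le_maxVar : ∀ ψ : MF (n+1), ∀ q ∈ ψ.vars, q ≤ ψ.maxVar
  | .var q' => by intro q hq; rw [vars_var'] at hq; rw [Set.mem_singleton_iff] at hq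
                  subst hq; exact le_refl _
  | .bot => by intro q hq; rw [vars_bot'] at hq; exact absurd hq (Set.notMem_empty q)
  | .and a b => by
      intro q hq
      rcases (Set.mem_union _ _ _).1 hq with h | h
      · exact le_trans (mem_vars_le_maxVar a q h) (le_max_left _ _)
      · exact le_trans (mem_vars_le_maxVar b q h) (le_max_right _ _)
  | .or a b => by
      intro q hq
      rcases (Set.mem_union _ _ _).1 hq with h | h
      · exact le_trans (mem_vars_le_maxVar a q h) (le_max_left _ _)
      · exact le_trans (mem_vars_le_maxVar b q h) (le_max_right _ _)
  | .imp a b => by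
      intro q hq
      rcases (Set.mem_union _ _ _).1 hq with h | h
      · exact le_trans (mem_vars_le_maxVar a q h) (le_max_left _ _)
      · exact le_trans (mem_vars_le_maxVar b q h) (le_max_right _ _)
  | .box i a => mem_vars_le_maxVar a

lemma len_neg (a : MF (n+1)) : (MF.neg a).len = a.len + 2 := by
  rw [MF.neg, MF.len, MF.len]

lemma len_dia (i : Fin (n+1)) (a : MF (n+1)) : (MF.dia i a).len = a.len + 5 := by
  rw [MF.dia, len_neg, MF.len, len_neg]

lemma len_pv : (pv : MF (n+1)).len = 1 := rfl

lemma len_blackDia (a : MF (n+1)) : (blackDia a).len = a.len + 16 := by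
  simp only [blackDia, MF.dia, MF.neg, pv, MF.len]
  omega

lemma len_alphaF (k : ℕ) : (alphaF k : MF (n+1)).len = 16 * k + 2 := by
  induction k with
  | zero => rfl
  | succ k ih => rw [alphaF_succ, len_blackDia, ih]; omega

lemma len_betaF (k : ℕ) : (betaF k : MF (n+1)).len = 16 * k + 13 := by
  simp only [betaF, MF.dia, MF.neg, pv, MF.len, len_alphaF]
  omega

lemma len_Bf (m : ℕ) : (Bf m : MF (n+1)).len = 16 * m + 29 := by
  rw [Bf, len_betaF]; omega

lemma len_sigmaT (m : ℕ) : ∀ ψ : MF (n+1), (sigmaT m ψ).len ≤ (16 * m + 31) * ψ.len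
  | .var k => by
      simp only [sigmaT, len_betaF, len_alphaF, MF.len]
      have h1 : 31*(k+1) ≤ (16*m+31)*(k+1) := Nat.mul_le_mul_right _ (by omega)
      nlinarith
  | .bot => by simp only [sigmaT, MF.len]; omega
  | .and a b => by
      simp only [sigmaT, MF.len]
      have h1 := len_sigmaT m a; have h2 := len_sigmaT m b
      have h3 : (16*m+31)*(a.len+b.len+1) = (16*m+31)*a.len + (16*m+31)*b.len + (16*m+31) := by
        ring
      have h4 : 1 ≤ 16*m+31 := by omega
      linarith
  | .or a b => by
      simp only [sigmaT, MF.len]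
      have h1 := len_sigmaT m a; have h2 := len_sigmaT m b
      have h3 : (16*m+31)*(a.len+b.len+1) = (16*m+31)*a.len + (16*m+31)*b.len + (16*m+31) := by
        ring
      have h4 : 1 ≤ 16*m+31 := by omega
      linarith
  | .imp a b => by
      simp only [sigmaT, MF.len]
      have h1 := len_sigmaT m a; have h2 := len_sigmaT m b
      have h3 : (16*m+31)*(a.len+b.len+1) = (16*m+31)*a.len + (16*m+31)*b.len + (16*m+31) := by
        ring
      have h4 : 1 ≤ 16*m+31 := by omega
      linarith
  | .box i a => by
      simp only [sigmaT, MF.len, len_Bf, len_betaF, len_alphaF]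
      have h1 := len_sigmaT m a
      have h3 : (16*m+31)*(a.len+1) = (16*m+31)*a.len + (16*m+31) := by ring
      linarith

lemma len_bigAnd (l : List (MF (n+1))) : ∀ ψ : MF (n+1),
    (bigAnd ψ l).len = ψ.len + (l.map (fun χ => χ.len + 1)).sum := by
  induction l with
  | nil => intro ψ; simp [bigAnd]
  | cons a l ih =>
    intro ψ
    have h := ih (ψ.and a)
    simp only [bigAnd, List.foldl_cons] at h ⊢
    rw [h, List.map_cons, List.sum_cons, MF.len]
    omega

lemma len_boxLe (ψ : MF (n+1)) : ∀ k, (boxLe k ψ).len + 2 = (n+2)^k * (ψ.len + 2) := by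
  intro k
  induction k with
  | zero => rw [pow_zero, one_mul]; rfl
  | succ k ih =>
    rw [boxLe, len_bigAnd]
    have hmap : (List.ofFn fun i : Fin (n+1) => MF.box i (boxLe k ψ)).map
        (fun χ => χ.len + 1) = List.ofFn fun _ : Fin (n+1) => ((boxLe k ψ).len + 2) := by
      rw [List.map_ofFn]
      rfl
    rw [hmap, List.sum_ofFn]
    simp only [Finset.sum_const, Finset.card_univ, Fintype.card_fin, smul_eq_mul]
    rw [pow_succ]
    nlinarith [ih]

lemma len_boxLeTail (ψ : MF (n+1)) : ∀ k, (boxLeTail k ψ).len + 2 = (n+1)^k * (ψ.len + 2) := by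
  intro k
  induction k with
  | zero => rw [pow_zero, one_mul]; rfl
  | succ k ih =>
    rw [boxLeTail, len_bigAnd]
    have hmap : (List.ofFn fun i : Fin n => MF.box i.succ (boxLeTail k ψ)).map
        (fun χ => χ.len + 1) = List.ofFn fun _ : Fin n => ((boxLeTail k ψ).len + 2) := by
      rw [List.map_ofFn]
      rfl
    rw [hmap, List.sum_ofFn]
    simp only [Finset.sum_const, Finset.card_univ, Fintype.card_fin, smul_eq_mul]
    rw [pow_succ]
    nlinarith [ih]

lemma len_boxLe_le (ψ : MF (n+1)) (k : ℕ) : (boxLe k ψ).len ≤ (n+2)^k * (ψ.len + 2) := by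
  have := len_boxLe ψ k; omega

lemma len_boxLeTail_le (ψ : MF (n+1)) (k : ℕ) :
    (boxLeTail k ψ).len ≤ (n+2)^k * (ψ.len + 2) := by
  have h := len_boxLeTail ψ k
  have hp : (n+1)^k ≤ (n+2)^k := Nat.pow_le_pow_left (by omega) k
  have : 1 ≤ ψ.len + 2 := by omega
  nlinarith

lemma aux_pow_quad : ∀ L : ℕ, 1 ≤ L → 560 * L^2 ≤ 1024^L := by
  intro L
  induction L with
  | zero => omega
  | succ L ih =>
    intro _
    by_cases hL : 1 ≤ L
    · have h1 := ih hL
      have h2 : 560 * (L+1)^2 ≤ 4 * (560 * L^2) := by nlinarith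
      have h3 : (4 : ℕ) * 1024^L ≤ 1024^(L+1) := by
        rw [pow_succ]
        have : (1:ℕ) ≤ 1024^L := Nat.one_le_pow _ _ (by omega)
        nlinarith
      omega
    · have : L = 0 := by omega
      subst this
      norm_num

lemma len_imp' (a b : MF (n+1)) : (MF.imp a b).len = a.len + b.len + 1 := rfl
lemma len_and' (a b : MF (n+1)) : (MF.and a b).len = a.len + b.len + 1 := rfl

set_option maxHeartbeats 1000000 in
lemma len_final (m : ℕ) (φ : MF (n+1)) (hm : m + 1 ≤ φ.len) :
    (MF.imp (Af m φ) (sigmaT m φ)).len ≤ (1024 * (n+2)^2) ^ φ.len := by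
  have hL1 : 1 ≤ φ.len := len_pos φ
  have hdL : φ.md ≤ φ.len := md_le_len φ
  have hP1 : 1 ≤ (n+2)^φ.md := Nat.one_le_pow _ _ (by omega)
  have hAA : (n+2)^φ.md ≤ (n+2)^φ.md * (n+2)^φ.md :=
    Nat.le_mul_of_pos_left _ (by omega)
  have hAA1 : 1 ≤ (n+2)^φ.md * (n+2)^φ.md := le_trans hP1 hAA
  have h1 : (boxLeTail φ.md (Bf m) : MF (n+1)).len ≤ (n+2)^φ.md * (16*m+31) := by
    have h := len_boxLeTail_le (n := n) (Bf m) φ.md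
    rw [len_Bf] at h
    have e : 16*m+29+2 = 16*m+31 := by ring
    rwa [e] at h
  have hc2 : (boxLe φ.md (MF.imp (Bf m) (boxLeTail φ.md (Bf m))) : MF (n+1)).len
      ≤ 2 * ((n+2)^φ.md * (n+2)^φ.md) * (16*m+33) := by
    have h := len_boxLe_le (n := n) (MF.imp (Bf m) (boxLeTail φ.md (Bf m))) φ.md
    have h2 : (MF.imp (Bf m) (boxLeTail φ.md (Bf m)) : MF (n+1)).len + 2
        ≤ (n+2)^φ.md * (16*m+31) + (16*m+32) := by
      rw [len_imp', len_Bf]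
      linarith
    have h3 := Nat.mul_le_mul_left ((n+2)^φ.md) h2
    have k1 : (n+2)^φ.md * (16*m+32) ≤ (n+2)^φ.md * (n+2)^φ.md * (16*m+33) :=
      Nat.mul_le_mul hAA (by omega)
    nlinarith
  have hdia : (boxLeTail φ.md (MF.neg (Bf m)) : MF (n+1)).len
      ≤ (n+2)^φ.md * (16*m+33) := by
    have h := len_boxLeTail_le (n := n) (MF.neg (Bf m)) φ.md
    rw [len_neg, len_Bf] at h
    have e : 16*m+29+2+2 = 16*m+33 := by ring
    rwa [e] at h
  have hdia2 : (diaLeTail φ.md (Bf m) : MF (n+1)).len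
      = (boxLeTail φ.md (MF.neg (Bf m)) : MF (n+1)).len + 2 := by
    rw [diaLeTail, len_neg]
  have hc3 : (boxLe φ.md (MF.imp (diaLeTail φ.md (Bf m)) (Bf m)) : MF (n+1)).len
      ≤ 2 * ((n+2)^φ.md * (n+2)^φ.md) * (16*m+35) := by
    have h := len_boxLe_le (n := n) (MF.imp (diaLeTail φ.md (Bf m)) (Bf m)) φ.md
    have h2 : (MF.imp (diaLeTail φ.md (Bf m)) (Bf m) : MF (n+1)).len + 2
        ≤ (n+2)^φ.md * (16*m+33) + (16*m+34) := by
      rw [len_imp', len_Bf, hdia2]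
      linarith
    have h3 := Nat.mul_le_mul_left ((n+2)^φ.md) h2
    have k1 : (n+2)^φ.md * (16*m+34) ≤ (n+2)^φ.md * (n+2)^φ.md * (16*m+35) :=
      Nat.mul_le_mul hAA (by omega)
    nlinarith
  have eA : (Af m φ : MF (n+1)).len
      = (Bf m : MF (n+1)).len
        + ((boxLe φ.md (MF.imp (Bf m) (boxLeTail φ.md (Bf m))) : MF (n+1)).len
          + (boxLe φ.md (MF.imp (diaLeTail φ.md (Bf m)) (Bf m)) : MF (n+1)).len + 1) + 1 := rfl
  have hA : (Af m φ).len ≤ 5 * ((n+2)^φ.md * (n+2)^φ.md) * (16*m+35) := by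
    rw [eA, len_Bf]
    have k2 : 16*m+31 ≤ (n+2)^φ.md * (n+2)^φ.md * (16*m+35) := by
      have h := Nat.mul_le_mul hAA1 (le_refl (16*m+35))
      have e : 1 * (16*m+35) = 16*m+35 := by ring
      rw [e] at h
      linarith
    have k6 : 2 * ((n+2)^φ.md * (n+2)^φ.md) * (16*m+33)
        ≤ 2 * ((n+2)^φ.md * (n+2)^φ.md) * (16*m+35) :=
      Nat.mul_le_mul_left _ (by omega)
    nlinarith
  have hs : (sigmaT m φ).len ≤ (16*m+31) * φ.len := len_sigmaT m φ
  have hPL : (n+2)^φ.md ≤ (n+2)^φ.len := Nat.pow_le_pow_right (by omega) hdL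
  have hE1 : (1:ℕ) ≤ (n+2)^φ.len * (n+2)^φ.len :=
    Nat.mul_pos (Nat.one_le_pow _ _ (by omega)) (Nat.one_le_pow _ _ (by omega))
  have hA2 : (Af m φ).len ≤ 175 * φ.len * ((n+2)^φ.len * (n+2)^φ.len) := by
    have k1 : (n+2)^φ.md * (n+2)^φ.md ≤ (n+2)^φ.len * (n+2)^φ.len :=
      Nat.mul_le_mul hPL hPL
    have hQ3 : 16*m+35 ≤ 35 * φ.len := by omega
    have k2 := Nat.mul_le_mul (Nat.mul_le_mul (le_refl 5) k1) hQ3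
    calc (Af m φ).len ≤ 5 * ((n+2)^φ.md * (n+2)^φ.md) * (16*m+35) := hA
      _ ≤ 5 * ((n+2)^φ.len * (n+2)^φ.len) * (35 * φ.len) := k2
      _ = 175 * φ.len * ((n+2)^φ.len * (n+2)^φ.len) := by ring
  have hs2 : (sigmaT m φ).len ≤ 31 * (φ.len * φ.len) * ((n+2)^φ.len * (n+2)^φ.len) := by
    have k1 : (16*m+31) * φ.len ≤ (31*φ.len) * φ.len :=
      Nat.mul_le_mul_right _ (by omega)
    have hpos : 0 < (n+2)^φ.len * (n+2)^φ.len := hE1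
    have k2 : (31*φ.len) * φ.len ≤ ((31*φ.len) * φ.len) * ((n+2)^φ.len * (n+2)^φ.len) :=
      Nat.le_mul_of_pos_right _ hpos
    calc (sigmaT m φ).len ≤ (16*m+31) * φ.len := hs
      _ ≤ (31*φ.len) * φ.len := k1
      _ ≤ ((31*φ.len) * φ.len) * ((n+2)^φ.len * (n+2)^φ.len) := k2
      _ = 31 * (φ.len * φ.len) * ((n+2)^φ.len * (n+2)^φ.len) := by ring
  have htot : (MF.imp (Af m φ) (sigmaT m φ)).len
      ≤ 560 * (φ.len)^2 * ((n+2)^φ.len * (n+2)^φ.len) := by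
    rw [len_imp']
    have k3 : 175 * φ.len ≤ 175 * (φ.len * φ.len) :=
      Nat.mul_le_mul_left 175 (Nat.le_mul_of_pos_right φ.len (by omega))
    have k5 : 175 * φ.len * ((n+2)^φ.len * (n+2)^φ.len)
        ≤ 175 * (φ.len * φ.len) * ((n+2)^φ.len * (n+2)^φ.len) :=
      Nat.mul_le_mul_right _ k3
    have hpos2 : 0 < φ.len * φ.len := Nat.mul_pos (by omega) (by omega)
    have k4 : (1:ℕ) ≤ (φ.len * φ.len) * ((n+2)^φ.len * (n+2)^φ.len) :=
      le_trans hE1 (Nat.le_mul_of_pos_left ((n+2)^φ.len * (n+2)^φ.len) hpos2)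
    have e : (560 : ℕ) * (φ.len)^2 * ((n+2)^φ.len * (n+2)^φ.len)
        = 175 * (φ.len * φ.len) * ((n+2)^φ.len * (n+2)^φ.len)
          + 31 * (φ.len * φ.len) * ((n+2)^φ.len * (n+2)^φ.len)
          + 354 * ((φ.len * φ.len) * ((n+2)^φ.len * (n+2)^φ.len)) := by ring
    linarith
  calc (MF.imp (Af m φ) (sigmaT m φ)).len
      ≤ 560 * (φ.len)^2 * ((n+2)^φ.len * (n+2)^φ.len) := htot
    _ ≤ 1024^φ.len * ((n+2)^φ.len * (n+2)^φ.len) :=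
        Nat.mul_le_mul_right _ (aux_pow_quad φ.len hL1)
    _ = (1024 * (n+2)^2)^φ.len := by rw [mul_pow, ← pow_mul, two_mul, pow_add]

end ModalProducts
namespace ModalProducts

variable {n : ℕ}

section Product

variable {Fs : Fin (n+1) → Frame 1}

lemma prod_step_update (z : (prodFrame Fs).W) (i : Fin (n+1)) (y : (Fs i).W)
    (h : (Fs i).R 0 (z i) y) : (prodFrame Fs).R i z (Function.update z i y) := by
  refine ⟨?_, ?_⟩
  · erw [Function.update_self]; exact h
  · intro k hk
    erw [Function.update_of_ne hk]

lemma prod_step_eq {z z' : (prodFrame Fs).W} {i : Fin (n+1)}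
    (h : (prodFrame Fs).R i z z') : z' = Function.update z i (z' i) := by
  funext k
  by_cases hk : k = i
  · subst hk; erw [Function.update_self]
  · erw [Function.update_of_ne hk]; exact (h.2 k hk).symm

lemma tail_step_coord0 {z z' : (prodFrame Fs).W} (h : StepTail (prodFrame Fs) z z') :
    z 0 = z' 0 := by
  obtain ⟨i, h⟩ := h
  exact h.2 0 (Fin.succ_ne_zero i).symm

lemma tailRN_coord0 : ∀ {k : ℕ} {z z' : (prodFrame Fs).W},
    RN (StepTail (prodFrame Fs)) k z z' → z 0 = z' 0 := by
  intro k
  induction k with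
  | zero => intro z z' h; rw [RN_zero_iff.1 h]
  | succ k ih =>
    intro z z' h
    rcases RN_succ_iff.1 h with h | ⟨w, hw, hr⟩
    · exact ih h
    · exact (tail_step_coord0 hw).trans (ih hr)

lemma tail_step_update0 {z z' : (prodFrame Fs).W} (a : (Fs 0).W)
    (h : StepTail (prodFrame Fs) z z') :
    StepTail (prodFrame Fs) (Function.update z 0 a) (Function.update z' 0 a) := by
  obtain ⟨i, h1, h2⟩ := h
  refine ⟨i, ?_, ?_⟩
  · erw [Function.update_of_ne (Fin.succ_ne_zero i), Function.update_of_ne (Fin.succ_ne_zero i)]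
    exact h1
  · intro k hk
    by_cases hk0 : k = 0
    · subst hk0; erw [Function.update_self]
    · erw [Function.update_of_ne hk0, Function.update_of_ne hk0]
      exact h2 k hk

lemma tailRN_update0 : ∀ {k : ℕ} {z z' : (prodFrame Fs).W} (a : (Fs 0).W),
    RN (StepTail (prodFrame Fs)) k z z' →
    RN (StepTail (prodFrame Fs)) k (Function.update z 0 a) (Function.update z' 0 a) := by
  intro k
  induction k with
  | zero => intro z z' a h; rw [RN_zero_iff.1 h]; exact RN.zero _
  | succ k ih =>
    intro z z' a h
    rcases RN_succ_iff.1 h with h | ⟨w, hw, hr⟩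
    · exact Or.inl (ih a h)
    · exact Or.inr ⟨Function.update w 0 a, tail_step_update0 a hw, ih a hr⟩

lemma stepTail_all {z z' : (prodFrame Fs).W} (h : StepTail (prodFrame Fs) z z') :
    StepAll (prodFrame Fs) z z' := by
  obtain ⟨i, h⟩ := h
  exact ⟨i.succ, h⟩

/-- recomposition: a path in the first factor lifts to a product path with fixed tail. -/
lemma headRN_lift : ∀ (k : ℕ) (a b : (Fs 0).W), RN ((Fs 0).R 0) k a b →
    ∀ (u : (prodFrame Fs).W), u 0 = a →
    RN (StepAll (prodFrame Fs)) k u (Function.update u 0 b) := by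
  intro k
  induction k with
  | zero =>
    intro a b h u hu
    have : b = u 0 := by rw [← RN_zero_iff.1 h, hu]
    rw [this, show Function.update u 0 (u 0) = u from Function.update_eq_self _ _]
    exact RN.zero u
  | succ k ih =>
    intro a b h u hu
    rcases RN_succ_iff.1 h with h | ⟨c, hc, hr⟩
    · exact Or.inl (ih a b h u hu)
    · refine Or.inr ⟨Function.update u 0 c, ⟨0, prod_step_update u 0 c (hu ▸ hc)⟩, ?_⟩
      have h2 := ih c b hr (Function.update u 0 c) (Function.update_self _ _ _)
      rwa [show Function.update (Function.update u 0 c) 0 b = Function.update u 0 b from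
        Function.update_idem _ _ _] at h2

/-- decomposition of a product path into a first-coordinate path followed by a
tail path. -/
lemma prod_decompose : ∀ (k : ℕ) (r z : (prodFrame Fs).W),
    RN (StepAll (prodFrame Fs)) k r z →
    ∃ k₁ k₂, k₁ + k₂ ≤ k ∧ RN ((Fs 0).R 0) k₁ (r 0) (z 0) ∧
      RN (StepTail (prodFrame Fs)) k₂ (Function.update r 0 (z 0)) z := by
  intro k
  induction k with
  | zero =>
    intro r z h
    rw [← RN_zero_iff.1 h]
    exact ⟨0, 0, le_refl 0, RN.zero _, by rw [show Function.update r 0 (r 0) = r from Function.update_eq_self _ _]; exact RN.zero r⟩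
  | succ k ih =>
    intro r z h
    rcases RN_succ_iff.1 h with h | ⟨w, ⟨i, hw⟩, hr⟩
    · obtain ⟨k₁, k₂, hk, h1, h2⟩ := ih r z h
      exact ⟨k₁, k₂, by omega, h1, h2⟩
    · obtain ⟨k₁, k₂, hk, h1, h2⟩ := ih w z hr
      by_cases hi : i = 0
      · subst hi
        refine ⟨k₁ + 1, k₂, by omega, ?_, ?_⟩
        · exact Or.inr ⟨w 0, hw.1, h1⟩
        · have hup : Function.update w 0 (z 0) = Function.update r 0 (z 0) := by
            funext j
            by_cases hj : j = 0
            · subst hj; erw [Function.update_self]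
            · erw [Function.update_of_ne hj, Function.update_of_ne hj]
              exact (hw.2 j hj).symm
          rwa [hup] at h2
      · have h0 : r 0 = w 0 := hw.2 0 (Ne.symm hi)
        refine ⟨k₁, k₂ + 1, by omega, h0 ▸ h1, ?_⟩
        refine Or.inr ⟨Function.update w 0 (z 0), ?_, h2⟩
        have hstep : StepTail (prodFrame Fs) r w := by
          rcases Fin.eq_succ_of_ne_zero hi with ⟨j, rfl⟩
          exact ⟨j, hw⟩
        have := tail_step_update0 (z 0) hstep
        rwa [show Function.update r 0 (z 0) = Function.update r 0 (z 0) from rfl] at this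
  
end Product

/-- a frame validating `T` is reflexive. -/
lemma reflexive_of_validT {F : Frame 1} (h : ValidSet F logicT) : ReflexiveFrame F := by
  intro x
  have hT : (MF.imp (MF.box 0 (MF.var 0)) (MF.var 0)) ∈ logicT := by
    intro G hG v y
    intro hb
    exact hb y (hG y)
  have := h _ hT (fun _ => {y | F.R 0 x y}) x
  exact this (fun y hy => hy)

/-- a reflexive frame validates `T`. -/
lemma validT_of_reflexive {F : Frame 1} (h : ReflexiveFrame F) : ValidSet F logicT :=
  fun ψ hψ => hψ F h

end ModalProducts
namespace ModalProducts

lemma RN_snoc {α : Type*} {S : α → α → Prop} :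
    ∀ {k : ℕ} {a b c : α}, RN S k a b → S b c → RN S (k+1) a c := by
  intro k
  induction k with
  | zero =>
    intro a b c hab hbc
    exact Or.inr ⟨c, (RN_zero_iff.1 hab) ▸ hbc, rfl⟩
  | succ k ih =>
    intro a b c hab hbc
    rcases RN_succ_iff.1 hab with h | ⟨w, hw, hr⟩
    · exact Or.inl (ih h hbc)
    · exact Or.inr ⟨w, hw, ih hr hbc⟩

lemma Frame.ext1 {F : Frame 1} {R' : Fin 1 → F.W → F.W → Prop}
    (h : ∀ i a b, R' i a b = F.R i a b) : Frame.mk F.W F.nonempty R' = F := by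
  have hR : R' = F.R := by funext i a b; exact h i a b
  rw [hR]

variable {n : ℕ}

/-- modified product factors: restrict the first relation to "good" points
(plus reflexivity), leave the others unchanged. -/
def modFrame (Fs : Fin (n+1) → Frame 1) (P : (i : Fin (n+1)) → (Fs i).W → Prop) :
    Fin (n+1) → Frame 1 :=
  fun i => ⟨(Fs i).W, (Fs i).nonempty, fun i0 a b =>
    if i = 0 then (a = b ∨ ((Fs i).R i0 a b ∧ P i a ∧ P i b)) else (Fs i).R i0 a b⟩

lemma modFrame_zero_R {Fs : Fin (n+1) → Frame 1} {P : (i : Fin (n+1)) → (Fs i).W → Prop}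
    (i0 : Fin 1) (a b : (Fs 0).W) :
    (modFrame Fs P 0).R i0 a b ↔ (a = b ∨ ((Fs 0).R i0 a b ∧ P 0 a ∧ P 0 b)) := by
  dsimp only [modFrame]
  rw [if_pos rfl]

lemma modFrame_succ_R {Fs : Fin (n+1) → Frame 1} {P : (i : Fin (n+1)) → (Fs i).W → Prop}
    (j : Fin n) (i0 : Fin 1) (a b : (Fs j.succ).W) :
    (modFrame Fs P j.succ).R i0 a b ↔ (Fs j.succ).R i0 a b := by
  dsimp only [modFrame]
  rw [if_neg (Fin.succ_ne_zero j)]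

lemma modFrame_succ_eq {Fs : Fin (n+1) → Frame 1} {P : (i : Fin (n+1)) → (Fs i).W → Prop}
    (j : Fin n) : modFrame Fs P j.succ = Fs j.succ := by
  refine Frame.ext1 ?_
  intro i0 a b
  rw [if_neg (Fin.succ_ne_zero j)]

theorem hard_dir (Ls : Fin n → Set (MF 1)) (φ : MF (n+1)) (m : ℕ)
    (h : φ ∈ productLogic (Fin.cases (motive := fun _ => Set (MF 1)) logicT Ls)) :
    MF.imp (Af m φ) (sigmaT m φ) ∈
      productLogic (Fin.cases (motive := fun _ => Set (MF 1)) logicT Ls) := by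
  rintro F ⟨Fs, hFs, rfl⟩ v r hA
  have hrefl : ReflexiveFrame (Fs 0) := reflexive_of_validT (hFs 0)
  obtain ⟨hB, hc2, hc3⟩ := hA
  set d := φ.md with hd
  -- the modified product frame
  set P : (i : Fin (n+1)) → (Fs i).W → Prop :=
    fun i x => Sat (prodFrame Fs) v (Function.update r i x) (Bf m) with hP
  have hPdef : ∀ (i : Fin (n+1)) (x : (Fs i).W),
      P i x ↔ Sat (prodFrame Fs) v (Function.update r i x) (Bf m) := fun i x => Iff.rfl
  have hGsValid : ∀ i, ValidSet (modFrame Fs P i)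
      (Fin.cases (motive := fun _ => Set (MF 1)) logicT Ls i) := by
    intro i
    refine Fin.cases (motive := fun i => ValidSet (modFrame Fs P i)
      (Fin.cases (motive := fun _ => Set (MF 1)) logicT Ls i)) ?_ ?_ i
    · refine validT_of_reflexive ?_
      intro x
      exact (modFrame_zero_R (Fs := Fs) (P := P) 0 x x).2 (Or.inl rfl)
    · intro j
      rw [modFrame_succ_eq j]
      exact hFs j.succ
  -- validity of φ in the modified product
  set u : ℕ → Set (prodFrame (modFrame Fs P)).W :=
    fun q => {z | Sat (prodFrame Fs) v z (betaF q)} with hu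
  have hSatN : ∀ z : (prodFrame (modFrame Fs P)).W, Sat (prodFrame (modFrame Fs P)) u z φ :=
    fun z => h (prodFrame (modFrame Fs P)) ⟨modFrame Fs P, hGsValid, rfl⟩ u z
  -- the key B lemma
  have keyB : ∀ (k : ℕ) (z : (prodFrame Fs).W), RN (StepAll (prodFrame Fs)) k r z → k ≤ d →
      (Sat (prodFrame Fs) v z (Bf m) ↔ P 0 (z 0)) := by
    intro k z hreach hk
    obtain ⟨k₁, k₂, hks, h1, h2⟩ := prod_decompose k r z hreach
    have hyreach : RN (StepAll (prodFrame Fs)) d r (Function.update r 0 (z 0)) :=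
      RN_mono_k (by omega) (headRN_lift k₁ (r 0) (z 0) h1 r rfl)
    have h2d : RN (StepTail (prodFrame Fs)) d (Function.update r 0 (z 0)) z :=
      RN_mono_k (by omega) h2
    rw [hPdef]
    constructor
    · intro hzB
      have h3 := Sat_boxLe d r |>.1 hc3 _ hyreach
      exact h3 (Sat_diaLeTail.2 ⟨z, h2d, hzB⟩)
    · intro hg
      have h3 := Sat_boxLe d r |>.1 hc2 _ hyreach hg
      exact Sat_boxLeTail d _ |>.1 h3 z h2d
  -- main induction
  have main : ∀ (ψ : MF (n+1)) (k : ℕ) (z : (prodFrame Fs).W),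
      RN (StepAll (prodFrame Fs)) k r z → k + ψ.md ≤ d →
      Sat (prodFrame Fs) v z (Bf m) →
      (Sat (prodFrame Fs) v z (sigmaT m ψ) ↔ Sat (prodFrame (modFrame Fs P)) u z ψ) := by
    intro ψ
    induction ψ with
    | var q => intro k z _ _ _; exact Iff.rfl
    | bot => intro k z _ _ _; exact Iff.rfl
    | and ψ₁ ψ₂ ih₁ ih₂ =>
      intro k z hr hk hB'
      have e1 := ih₁ k z hr (by rw [MF.md] at hk; omega) hB'
      have e2 := ih₂ k z hr (by rw [MF.md] at hk; omega) hB'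
      exact and_congr e1 e2
    | or ψ₁ ψ₂ ih₁ ih₂ =>
      intro k z hr hk hB'
      have e1 := ih₁ k z hr (by rw [MF.md] at hk; omega) hB'
      have e2 := ih₂ k z hr (by rw [MF.md] at hk; omega) hB'
      exact or_congr e1 e2
    | imp ψ₁ ψ₂ ih₁ ih₂ =>
      intro k z hr hk hB'
      have e1 := ih₁ k z hr (by rw [MF.md] at hk; omega) hB'
      have e2 := ih₂ k z hr (by rw [MF.md] at hk; omega) hB'
      exact imp_congr e1 e2
    | box i ψ ih =>
      intro k z hr hk hB'
      have hkd : k + 1 + ψ.md ≤ d := by rw [MF.md] at hk; omega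
      have hkd' : k + ψ.md ≤ d := by omega
      have hk1 : k + 1 ≤ d := by omega
      have hkk : k ≤ d := by omega
      by_cases hi : i = 0
      · subst hi
        constructor
        · intro hbox z' hstep'
          rcases (modFrame_zero_R (Fs := Fs) (P := P) 0 (z 0) (z' 0)).1 hstep'.1 with heq | ⟨hR, _, hg'⟩
          · have hzz : z' = z := by
              funext j
              by_cases hj : j = 0
              · subst hj; exact heq.symm
              · exact (hstep'.2 j hj).symm
            rw [hzz]
            have hMstep : (prodFrame Fs).R 0 z z := ⟨hrefl (z 0), fun _ _ => rfl⟩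
            exact (ih k z hr hkd' hB').1 (hbox z hMstep hB')
          · have hMstep : (prodFrame Fs).R 0 z z' := ⟨hR, hstep'.2⟩
            have hreach' : RN (StepAll (prodFrame Fs)) (k+1) r z' :=
              RN_snoc hr ⟨0, hMstep⟩
            have hB'' : Sat (prodFrame Fs) v z' (Bf m) := (keyB (k+1) z' hreach' hk1).2 hg'
            exact (ih (k+1) z' hreach' hkd hB'').1 (hbox z' hMstep hB'')
        · intro hbox z' hstepM hBz'
          have hreach' : RN (StepAll (prodFrame Fs)) (k+1) r z' :=
            RN_snoc hr ⟨0, hstepM⟩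
          have hstepN : (prodFrame (modFrame Fs P)).R 0 z z' := by
            refine ⟨?_, hstepM.2⟩
            refine (modFrame_zero_R (Fs := Fs) (P := P) 0 (z 0) (z' 0)).2 (Or.inr ⟨hstepM.1, ?_, ?_⟩)
            · exact (keyB k z hr hkk).1 hB'
            · exact (keyB (k+1) z' hreach' hk1).1 hBz'
          exact (ih (k+1) z' hreach' hkd hBz').2 (hbox z' hstepN)
      · obtain ⟨j, rfl⟩ := Fin.eq_succ_of_ne_zero hi
        have hBpres : ∀ z' : (prodFrame Fs).W, (prodFrame Fs).R j.succ z z' →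
            (RN (StepAll (prodFrame Fs)) (k+1) r z' ∧ Sat (prodFrame Fs) v z' (Bf m)) := by
          intro z' hstep
          have hreach' : RN (StepAll (prodFrame Fs)) (k+1) r z' :=
            RN_snoc hr ⟨j.succ, hstep⟩
          refine ⟨hreach', ?_⟩
          have h00 : z 0 = z' 0 := hstep.2 0 (Ne.symm (Fin.succ_ne_zero j))
          refine (keyB (k+1) z' hreach' hk1).2 ?_
          rw [← h00]
          exact (keyB k z hr hkk).1 hB'
        constructor
        · intro hbox z' hstep'
          have hMstep : (prodFrame Fs).R j.succ z z' :=
            ⟨(modFrame_succ_R (Fs := Fs) (P := P) j 0 (z j.succ) (z' j.succ)).1 hstep'.1, hstep'.2⟩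
          obtain ⟨hreach', hBz'⟩ := hBpres z' hMstep
          exact (ih (k+1) z' hreach' hkd hBz').1 (hbox z' hMstep hBz')
        · intro hbox z' hstepM _
          obtain ⟨hreach', hBz'⟩ := hBpres z' hstepM
          have hstepN : (prodFrame (modFrame Fs P)).R j.succ z z' :=
            ⟨(modFrame_succ_R (Fs := Fs) (P := P) j 0 (z j.succ) (z' j.succ)).2 hstepM.1, hstepM.2⟩
          exact (ih (k+1) z' hreach' hkd hBz').2 (hbox z' hstepN)
  exact (main φ 0 r (RN.zero r) (by omega) hB).2 (hSatN r)

end ModalProducts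
namespace ModalProducts

variable {n : ℕ}

/-- worlds of the chain extension of a frame. -/
abbrev ChainW (W : Type) : Type := W ⊕ (W × ℕ × ℕ × Bool)

/-- one step of the chain relation. -/
def chainStep {W : Type} (R : W → W → Prop) (m : ℕ) : ChainW W → ChainW W → Prop
  | .inl x, .inl y => R x y
  | .inl x, .inr (y, t, j, b) => y = x ∧ 1 ≤ t ∧ t ≤ m+1 ∧ j = 0 ∧ b = true
  | .inr (x, t, j, true), .inr (y, t', j', b') =>
      y = x ∧ t' = t ∧ j' = j + 1 ∧ j + 1 ≤ t ∧ t ≤ m+1 ∧ b' = false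
  | .inr (x, t, j, false), .inr (y, t', j', b') =>
      y = x ∧ t' = t ∧ j' = j ∧ 1 ≤ j ∧ j ≤ t ∧ t ≤ m+1 ∧ b' = true
  | _, _ => False

/-- the (reflexive) chain relation. -/
def chainRel {W : Type} (R : W → W → Prop) (m : ℕ) (c c' : ChainW W) : Prop :=
  c = c' ∨ chainStep R m c c'

/-- the chain frame over a frame. -/
def chainFrame (F : Frame 1) (m : ℕ) : Frame 1 :=
  ⟨ChainW F.W, ⟨Sum.inl F.nonempty.some⟩, fun _ => chainRel (F.R 0) m⟩

lemma chainFrame_refl (F : Frame 1) (m : ℕ) : ReflexiveFrame (chainFrame F m) :=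
  fun _ => Or.inl rfl

section chainStepLemmas

variable {W : Type} {R : W → W → Prop} {m : ℕ}

lemma chainStep_inrT_iff {x : W} {t j : ℕ} {c' : ChainW W} :
    chainStep R m (Sum.inr (x, t, j, true)) c' ↔
      (c' = Sum.inr (x, t, j+1, false) ∧ j + 1 ≤ t ∧ t ≤ m+1) := by
  cases c' with
  | inl y => simp [chainStep]
  | inr p =>
    obtain ⟨y, t', j', b'⟩ := p
    cases b' <;> simp [chainStep, Sum.inr.injEq, Prod.mk.injEq] <;> aesop

lemma chainStep_inrF_iff {x : W} {t j : ℕ} {c' : ChainW W} :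
    chainStep R m (Sum.inr (x, t, j, false)) c' ↔
      (c' = Sum.inr (x, t, j, true) ∧ 1 ≤ j ∧ j ≤ t ∧ t ≤ m+1) := by
  cases c' with
  | inl y => simp [chainStep]
  | inr p =>
    obtain ⟨y, t', j', b'⟩ := p
    cases b' <;> simp [chainStep, Sum.inr.injEq, Prod.mk.injEq] <;> aesop

lemma chainStep_inl_iff {x : W} {c' : ChainW W} :
    chainStep R m (Sum.inl x) c' ↔
      ((∃ y, c' = Sum.inl y ∧ R x y) ∨
        (∃ t, c' = Sum.inr (x, t, 0, true) ∧ 1 ≤ t ∧ t ≤ m+1)) := by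
  cases c' with
  | inl y => simp [chainStep, Sum.inl.injEq, eq_comm]
  | inr p =>
    obtain ⟨y, t', j', b'⟩ := p
    cases b' <;> simp [chainStep, Sum.inr.injEq, Prod.mk.injEq] <;> aesop

lemma chainStep_to_inr0T {c : ChainW W} {x : W} {t : ℕ} :
    chainStep R m c (Sum.inr (x, t, 0, true)) ↔ (c = Sum.inl x ∧ 1 ≤ t ∧ t ≤ m+1) := by
  cases c with
  | inl y => simp [chainStep, Sum.inl.injEq, eq_comm]
  | inr p =>
    obtain ⟨y, t', j', b'⟩ := p
    cases b' <;> simp [chainStep, Sum.inr.injEq, Prod.mk.injEq] <;> omega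

end chainStepLemmas

/-- the type of tails of a product point. -/
def tailW (Hs : Fin (n+1) → Frame 1) : Type := ∀ j : Fin n, (Hs j.succ).W

/-- build a product point from a head and a tail. -/
def mkP (Hs : Fin (n+1) → Frame 1) (x : (Hs 0).W) (t : tailW Hs) : (prodFrame Hs).W :=
  fun i => Fin.cases (motive := fun i => (Hs i).W) x t i

/-- the factor frames of the chain product. -/
def chFs (Hs : Fin (n+1) → Frame 1) (m : ℕ) : Fin (n+1) → Frame 1 :=
  Fin.cases (chainFrame (Hs 0) m) (fun j => Hs j.succ)

/-- build a point of the chain product. -/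
def mkN (Hs : Fin (n+1) → Frame 1) (m : ℕ) (c : ChainW (Hs 0).W) (t : tailW Hs) :
    (prodFrame (chFs Hs m)).W :=
  fun i => Fin.cases (motive := fun i => (chFs Hs m i).W) c t i

/-- the tail of a point of the chain product. -/
def tailN (Hs : Fin (n+1) → Frame 1) (m : ℕ) (z : (prodFrame (chFs Hs m)).W) : tailW Hs :=
  fun j => z j.succ

/-- whether the chain `t` attached to `x` is active at a given tail. -/
def chActive (Hs : Fin (n+1) → Frame 1) (u : ℕ → Set (prodFrame Hs).W) (m : ℕ)
    (x : (Hs 0).W) (tl : tailW Hs) (t : ℕ) : Prop :=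
  t = m+1 ∨ (t ≤ m ∧ mkP Hs x tl ∈ u t)

/-- the valuation of `p` on the chain product. -/
def chVal (Hs : Fin (n+1) → Frame 1) (u : ℕ → Set (prodFrame Hs).W) (m : ℕ) :
    ℕ → Set (prodFrame (chFs Hs m)).W :=
  fun _ => {z | ∃ x t j, z 0 = Sum.inr (x, t, j, true) ∧ 1 ≤ t ∧ t ≤ m+1 ∧ j ≤ t ∧
    chActive Hs u m x (tailN Hs m z) t}

section chainHelpers

variable {Hs : Fin (n+1) → Frame 1} {u : ℕ → Set (prodFrame Hs).W} {m : ℕ}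

lemma mkP_zero (x : (Hs 0).W) (t : tailW Hs) : mkP Hs x t 0 = x := rfl

lemma mkP_succ (x : (Hs 0).W) (t : tailW Hs) (j : Fin n) : mkP Hs x t j.succ = t j := rfl

lemma mkP_eta (y : (prodFrame Hs).W) : mkP Hs (y 0) (fun j => y j.succ) = y := by
  funext i
  refine Fin.cases ?_ ?_ i
  · rfl
  · intro j; rfl

lemma mkP_step {x x' : (Hs 0).W} (t : tailW Hs) (h : (Hs 0).R 0 x x') :
    (prodFrame Hs).R 0 (mkP Hs x t) (mkP Hs x' t) := by
  refine ⟨h, ?_⟩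
  intro k hk
  obtain ⟨j, rfl⟩ := Fin.eq_succ_of_ne_zero hk
  rfl

lemma tailN_mkN (c : ChainW (Hs 0).W) (t : tailW Hs) : tailN Hs m (mkN Hs m c t) = t := by
  funext j; rfl

lemma mkN_zero (c : ChainW (Hs 0).W) (t : tailW Hs) : mkN Hs m c t 0 = c := rfl

lemma tailN_update0 (z : (prodFrame (chFs Hs m)).W) (c : ChainW (Hs 0).W) :
    tailN Hs m (Function.update z 0 c) = tailN Hs m z := by
  funext j
  show Function.update z 0 c j.succ = z j.succ
  erw [Function.update_of_ne (Fin.succ_ne_zero j)]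

lemma step0_tailN {z z' : (prodFrame (chFs Hs m)).W}
    (h : (prodFrame (chFs Hs m)).R 0 z z') : tailN Hs m z' = tailN Hs m z := by
  funext j
  exact (h.2 j.succ (Fin.succ_ne_zero j)).symm

/-- membership in the chain valuation at an `a`-point. -/
lemma chVal_inrT {z : (prodFrame (chFs Hs m)).W} {x : (Hs 0).W} {t j : ℕ}
    (hz : z 0 = Sum.inr (x, t, j, true)) :
    (z ∈ chVal Hs u m 0) ↔ (1 ≤ t ∧ t ≤ m+1 ∧ j ≤ t ∧ chActive Hs u m x (tailN Hs m z) t) := by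
  constructor
  · rintro ⟨x', t', j', hz', h1, h2, h3, h4⟩
    rw [hz] at hz'
    have e : (Sum.inr (x,t,j,true) : ChainW (Hs 0).W) = Sum.inr (x',t',j',true) := hz'
    simp only [Sum.inr.injEq, Prod.mk.injEq, and_true] at e
    obtain ⟨rfl, rfl, rfl⟩ := e
    exact ⟨h1, h2, h3, h4⟩
  · rintro ⟨h1, h2, h3, h4⟩
    exact ⟨x, t, j, hz, h1, h2, h3, h4⟩

lemma chVal_not_inrF {z : (prodFrame (chFs Hs m)).W} {x : (Hs 0).W} {t j : ℕ}
    (hz : z 0 = Sum.inr (x, t, j, false)) : z ∉ chVal Hs u m 0 := by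
  rintro ⟨x', t', j', hz', -, -, -, -⟩
  rw [hz] at hz'
  have e : (Sum.inr (x,t,j,false) : ChainW (Hs 0).W) = Sum.inr (x',t',j',true) := hz'
  simp only [Sum.inr.injEq, Prod.mk.injEq] at e
  exact absurd e.2.2.2 (by simp)

lemma chVal_not_inl {z : (prodFrame (chFs Hs m)).W} {x : (Hs 0).W}
    (hz : z 0 = Sum.inl x) : z ∉ chVal Hs u m 0 := by
  rintro ⟨x', t', j', hz', -, -, -, -⟩
  rw [hz] at hz'
  have e : (Sum.inl x : ChainW (Hs 0).W) = Sum.inr (x',t',j',true) := hz'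
  exact absurd e (by simp)

end chainHelpers

end ModalProducts
namespace ModalProducts

variable {n : ℕ}

theorem easy_dir (Ls : Fin n → Set (MF 1)) (φ : MF (n+1)) (m : ℕ)
    (hvars : ∀ q ∈ φ.vars, 1 ≤ q ∧ q ≤ m)
    (h : MF.imp (Af m φ) (sigmaT m φ) ∈
      productLogic (Fin.cases (motive := fun _ => Set (MF 1)) logicT Ls)) :
    φ ∈ productLogic (Fin.cases (motive := fun _ => Set (MF 1)) logicT Ls) := by
  rintro F ⟨Hs, hHs, rfl⟩ u w
  have hrefl : ReflexiveFrame (Hs 0) := reflexive_of_validT (hHs 0)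
  have hval : ∀ i, ValidSet (chFs Hs m i)
      (Fin.cases (motive := fun _ => Set (MF 1)) logicT Ls i) := by
    intro i
    refine Fin.cases (motive := fun i => ValidSet (chFs Hs m i)
      (Fin.cases (motive := fun _ => Set (MF 1)) logicT Ls i)) ?_ ?_ i
    · exact validT_of_reflexive (chainFrame_refl (Hs 0) m)
    · intro j
      exact hHs j.succ
  have hSat0 : ∀ z, Sat (prodFrame (chFs Hs m)) (chVal Hs u m) z
      (MF.imp (Af m φ) (sigmaT m φ)) :=
    fun z => h (prodFrame (chFs Hs m)) ⟨chFs Hs m, hval, rfl⟩ (chVal Hs u m) z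
  -- the alpha lemma
  have alphaLem : ∀ (k j t : ℕ) (x : (Hs 0).W) (z : (prodFrame (chFs Hs m)).W),
      z 0 = Sum.inr (x, t, j, true) → 1 ≤ t → t ≤ m+1 → j ≤ t →
      chActive Hs u m x (tailN Hs m z) t →
      (Sat (prodFrame (chFs Hs m)) (chVal Hs u m) z (alphaF k) ↔ j + k = t) := by
    intro k
    induction k with
    | zero =>
      intro j t x z hz h1t htm hjt hact
      rw [alphaF_zero]
      constructor
      · intro hbox
        by_contra hne
        have hjlt : j + 1 ≤ t := by omega
        have hcs : (chFs Hs m 0).R 0 (z 0) (Sum.inr (x, t, j+1, false)) := by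
          rw [hz]
          exact Or.inr ⟨rfl, rfl, rfl, hjlt, htm, rfl⟩
        have hp := hbox _ (prod_step_update z 0 _ hcs)
        exact chVal_not_inrF (Function.update_self _ _ _) hp
      · intro hjeq z' hstep
        rcases hstep.1 with heq | hcs
        · refine (chVal_inrT (z := z') (by rw [← heq]; exact hz)).2 ⟨h1t, htm, hjt, ?_⟩
          rw [step0_tailN hstep]; exact hact
        · rw [hz] at hcs
          obtain ⟨-, hlt, -⟩ := chainStep_inrT_iff.1 hcs
          omega
    | succ k ih =>
      intro j t x z hz h1t htm hjt hact
      rw [alphaF_succ, blackDia, Sat_dia]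
      constructor
      · rintro ⟨z₁, hstep1, hnp1, hdia2⟩
        obtain ⟨z₂, hstep2, hp2, hα⟩ := Sat_dia.1 hdia2
        rcases hstep1.1 with heq | hcs
        · refine absurd ((chVal_inrT (z := z₁) (by rw [← heq]; exact hz)).2
            ⟨h1t, htm, hjt, ?_⟩) (Sat_neg.1 hnp1)
          rw [step0_tailN hstep1]; exact hact
        · rw [hz] at hcs
          obtain ⟨hz1, hj1t, -⟩ := chainStep_inrT_iff.1 hcs
          rcases hstep2.1 with heq2 | hcs2
          · exact absurd hp2 (chVal_not_inrF (by rw [← heq2]; exact hz1))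
          · rw [hz1] at hcs2
            obtain ⟨hz2, -, -, -⟩ := chainStep_inrF_iff.1 hcs2
            have htail : tailN Hs m z₂ = tailN Hs m z := by
              rw [step0_tailN hstep2, step0_tailN hstep1]
            have hres := (ih (j+1) t x z₂ hz2 h1t htm hj1t
              (by rw [htail]; exact hact)).1 hα
            omega
      · intro heq
        have hj1t : j + 1 ≤ t := by omega
        have hcs1 : (chFs Hs m 0).R 0 (z 0) (Sum.inr (x, t, j+1, false)) := by
          rw [hz]
          exact Or.inr ⟨rfl, rfl, rfl, hj1t, htm, rfl⟩
        have hstep1 := prod_step_update z 0 _ hcs1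
        set z₁ := Function.update z 0 (Sum.inr (x, t, j+1, false) :
          ChainW (Hs 0).W) with hz₁def
        have hz₁0 : z₁ 0 = Sum.inr (x, t, j+1, false) := Function.update_self _ _ _
        have hcs2 : (chFs Hs m 0).R 0 (z₁ 0) (Sum.inr (x, t, j+1, true)) := by
          rw [hz₁0]
          exact Or.inr ⟨rfl, rfl, rfl, Nat.succ_le_succ (Nat.zero_le _), hj1t, htm, rfl⟩
        have hstep2 := prod_step_update z₁ 0 _ hcs2
        set z₂ := Function.update z₁ 0 (Sum.inr (x, t, j+1, true) :
          ChainW (Hs 0).W) with hz₂def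
        have hz₂0 : z₂ 0 = Sum.inr (x, t, j+1, true) := Function.update_self _ _ _
        have htail2 : tailN Hs m z₂ = tailN Hs m z := by
          erw [hz₂def, tailN_update0, hz₁def, tailN_update0]
        refine ⟨z₁, hstep1, ?_, ?_⟩
        · exact fun hp => chVal_not_inrF hz₁0 hp
        · refine Sat_dia.2 ⟨z₂, hstep2, ?_, ?_⟩
          · refine (chVal_inrT hz₂0).2 ⟨h1t, htm, hj1t, ?_⟩
            rw [htail2]; exact hact
          · exact (ih (j+1) t x z₂ hz₂0 h1t htm hj1t
              (by rw [htail2]; exact hact)).2 (by omega)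
  -- the B lemma
  have hBiff : ∀ (z : (prodFrame (chFs Hs m)).W),
      Sat (prodFrame (chFs Hs m)) (chVal Hs u m) z (Bf m) ↔ ∃ x, z 0 = Sum.inl x := by
    intro z
    constructor
    · rintro ⟨hnp, hdia⟩
      obtain ⟨z₁, hstep1, hp1, hα⟩ := Sat_dia.1 hdia
      obtain ⟨x', t', j', hz1, h1t, htm, hjt, hact⟩ := hp1
      have ht' := (alphaLem (m+1) j' t' x' z₁ hz1 h1t htm hjt hact).1 hα
      have hj0 : j' = 0 := by omega
      subst hj0
      rcases hstep1.1 with heq | hcs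
      · refine absurd ((chVal_inrT (z := z) (by rw [heq]; exact hz1)).2
          ⟨h1t, htm, hjt, ?_⟩) (Sat_neg.1 hnp)
        rw [← step0_tailN hstep1]; exact hact
      · rw [hz1] at hcs
        exact ⟨x', (chainStep_to_inr0T.1 hcs).1⟩
    · rintro ⟨x, hz⟩
      have hcs : (chFs Hs m 0).R 0 (z 0) (Sum.inr (x, m+1, 0, true)) := by
        rw [hz]
        exact Or.inr ⟨rfl, by omega, le_refl _, rfl, rfl⟩
      refine ⟨fun hp => chVal_not_inl hz hp, ?_⟩
      refine Sat_dia.2 ⟨Function.update z 0 (Sum.inr (x, m+1, 0, true) :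
        ChainW (Hs 0).W), prod_step_update z 0 _ hcs, ?_, ?_⟩
      · exact (chVal_inrT (Function.update_self _ _ _)).2
          ⟨by omega, le_refl _, Nat.zero_le _, Or.inl rfl⟩
      · exact (alphaLem (m+1) 0 (m+1) x _ (Function.update_self _ _ _) (by omega)
          (le_refl _) (Nat.zero_le _) (Or.inl rfl)).2 (by omega)
  -- the beta lemma
  have betaLem : ∀ (q : ℕ), 1 ≤ q → q ≤ m → ∀ (z : (prodFrame (chFs Hs m)).W)
      (x : (Hs 0).W), z 0 = Sum.inl x →
      (Sat (prodFrame (chFs Hs m)) (chVal Hs u m) z (betaF q) ↔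
        mkP Hs x (tailN Hs m z) ∈ u q) := by
    intro q h1q hqm z x hz
    constructor
    · rintro ⟨-, hdia⟩
      obtain ⟨z₁, hstep1, hp1, hα⟩ := Sat_dia.1 hdia
      obtain ⟨x', t', j', hz1, h1t, htm, hjt, hact⟩ := hp1
      rcases hstep1.1 with heq | hcs
      · rw [← heq, hz] at hz1
        exact absurd hz1 (by simp)
      · rw [hz] at hcs
        rcases chainStep_inl_iff.1 hcs with ⟨y, hy, -⟩ | ⟨t, hy, h1t', htm'⟩
        · rw [hy] at hz1
          exact absurd hz1 (by simp)
        · rw [hy] at hz1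
          have e : (Sum.inr (x,t,0,true) : ChainW (Hs 0).W) = Sum.inr (x',t',j',true) := hz1
          simp only [Sum.inr.injEq, Prod.mk.injEq, and_true] at e
          obtain ⟨rfl, rfl, rfl⟩ := e
          have htq := (alphaLem q 0 t x z₁ hy h1t htm (Nat.zero_le _) hact).1 hα
          have htq' : t = q := by omega
          subst htq'
          rcases hact with hup | ⟨-, hmem⟩
          · omega
          · rwa [step0_tailN hstep1] at hmem
    · intro hu
      have hcs : (chFs Hs m 0).R 0 (z 0) (Sum.inr (x, q, 0, true)) := by
        rw [hz]
        exact Or.inr ⟨rfl, h1q, by omega, rfl, rfl⟩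
      have hact : chActive Hs u m x
          (tailN Hs m (Function.update z 0 (Sum.inr (x, q, 0, true) : ChainW (Hs 0).W))) q := by
        rw [tailN_update0]
        exact Or.inr ⟨hqm, hu⟩
      refine ⟨fun hp => chVal_not_inl hz hp, ?_⟩
      refine Sat_dia.2 ⟨Function.update z 0 (Sum.inr (x, q, 0, true) : ChainW (Hs 0).W),
        prod_step_update z 0 _ hcs, ?_, ?_⟩
      · exact (chVal_inrT (Function.update_self _ _ _)).2
          ⟨h1q, by omega, Nat.zero_le _, hact⟩
      · exact (alphaLem q 0 q x _ (Function.update_self _ _ _) h1q (by omega)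
          (Nat.zero_le _) hact).2 (by omega)
  -- the main lemma
  have mainLem : ∀ (ψ : MF (n+1)), (∀ q ∈ ψ.vars, 1 ≤ q ∧ q ≤ m) →
      ∀ (z : (prodFrame (chFs Hs m)).W) (x : (Hs 0).W), z 0 = Sum.inl x →
      (Sat (prodFrame (chFs Hs m)) (chVal Hs u m) z (sigmaT m ψ) ↔
        Sat (prodFrame Hs) u (mkP Hs x (tailN Hs m z)) ψ) := by
    intro ψ
    induction ψ with
    | var q =>
      intro hv z x hz
      obtain ⟨h1q, hqm⟩ := hv q rfl
      exact betaLem q h1q hqm z x hz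
    | bot => intro _ z x _; exact Iff.rfl
    | and ψ₁ ψ₂ ih₁ ih₂ =>
      intro hv z x hz
      exact and_congr (ih₁ (fun q hq => hv q (Set.mem_union_left _ hq)) z x hz)
        (ih₂ (fun q hq => hv q (Set.mem_union_right _ hq)) z x hz)
    | or ψ₁ ψ₂ ih₁ ih₂ =>
      intro hv z x hz
      exact or_congr (ih₁ (fun q hq => hv q (Set.mem_union_left _ hq)) z x hz)
        (ih₂ (fun q hq => hv q (Set.mem_union_right _ hq)) z x hz)
    | imp ψ₁ ψ₂ ih₁ ih₂ =>
      intro hv z x hz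
      exact imp_congr (ih₁ (fun q hq => hv q (Set.mem_union_left _ hq)) z x hz)
        (ih₂ (fun q hq => hv q (Set.mem_union_right _ hq)) z x hz)
    | box i ψ ih =>
      intro hv z x hz
      have ihv : ∀ q ∈ ψ.vars, 1 ≤ q ∧ q ≤ m := hv
      by_cases hi : i = 0
      · subst hi
        constructor
        · intro hbox y hy
          have hR : (Hs 0).R 0 x (y 0) := hy.1
          have hcs : (chFs Hs m 0).R 0 (z 0) (Sum.inl (y 0)) := by
            rw [hz]
            exact Or.inr hR
          have hstep := prod_step_update z 0 _ hcs
          have hz'0 : Function.update z 0 (Sum.inl (y 0) : ChainW (Hs 0).W) 0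
              = Sum.inl (y 0) := Function.update_self _ _ _
          have hB' := (hBiff _).2 ⟨y 0, hz'0⟩
          have hσ := hbox _ hstep hB'
          have := (ih ihv _ (y 0) hz'0).1 hσ
          rw [tailN_update0] at this
          have hy' : y = mkP Hs (y 0) (tailN Hs m z) := by
            funext i
            refine Fin.cases ?_ ?_ i
            · rfl
            · intro j
              exact (hy.2 j.succ (Fin.succ_ne_zero j)).symm
          rwa [← hy'] at this
        · intro hbox z' hstep hB'
          obtain ⟨x', hz'⟩ := (hBiff z').1 hB'
          have hR : (Hs 0).R 0 x x' := by
            rcases hstep.1 with heq | hcs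
            · rw [hz] at heq
              rw [hz'] at heq
              have e : (Sum.inl x : ChainW (Hs 0).W) = Sum.inl x' := heq
              simp only [Sum.inl.injEq] at e
              rw [← e]
              exact hrefl x
            · rw [hz, hz'] at hcs
              exact hcs
          have hψ := hbox (mkP Hs x' (tailN Hs m z)) (mkP_step _ hR)
          have := (ih ihv z' x' hz').2 (by rwa [step0_tailN hstep])
          exact this
      · obtain ⟨j, rfl⟩ := Fin.eq_succ_of_ne_zero hi
        constructor
        · intro hbox y hy
          have hstep := prod_step_update z j.succ (y j.succ) hy.1
          set z' := Function.update z j.succ (y j.succ) with hz'def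
          have hz'0 : z' 0 = Sum.inl x := by
            erw [hz'def, Function.update_of_ne (Ne.symm (Fin.succ_ne_zero j))]
            exact hz
          have hB' := (hBiff z').2 ⟨x, hz'0⟩
          have hσ := hbox z' hstep hB'
          have hres := (ih ihv z' x hz'0).1 hσ
          have hy' : mkP Hs x (tailN Hs m z') = y := by
            funext i
            refine Fin.cases ?_ ?_ i
            · exact (hy.2 0 (Ne.symm (Fin.succ_ne_zero j)))
            · intro i'
              show tailN Hs m z' i' = y i'.succ
              by_cases hij : i' = j
              · subst hij
                show Function.update z i'.succ (y i'.succ) i'.succ = y i'.succ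
                exact Function.update_self _ _ _
              · have : z' i'.succ = z i'.succ := by
                  erw [hz'def, Function.update_of_ne
                    (fun hcon => hij (Fin.succ_injective n hcon))]
                show z' i'.succ = y i'.succ
                rw [this]
                exact hy.2 i'.succ (fun hcon => hij (Fin.succ_injective n hcon))
          rwa [hy'] at hres
        · intro hbox z' hstep hB'
          have hz'0 : z' 0 = Sum.inl x := by
            rw [← hstep.2 0 (Ne.symm (Fin.succ_ne_zero j))]
            exact hz
          have hy : (prodFrame Hs).R j.succ (mkP Hs x (tailN Hs m z))
              (mkP Hs x (tailN Hs m z')) := by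
            refine ⟨hstep.1, ?_⟩
            intro k hk
            rcases Fin.eq_zero_or_eq_succ k with rfl | ⟨i', rfl⟩
            · rfl
            · show tailN Hs m z i' = tailN Hs m z' i'
              have hne : i' ≠ j := fun hcon => hk (by rw [hcon])
              exact hstep.2 i'.succ (fun hcon => hne (Fin.succ_injective n hcon))
          have hψ := hbox _ hy
          exact (ih ihv z' x hz'0).2 hψ
  -- A holds at the evaluation point
  have hAz : Sat (prodFrame (chFs Hs m)) (chVal Hs u m)
      (mkN Hs m (Sum.inl (w 0)) (fun j => w j.succ)) (Af m φ) := by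
    refine ⟨(hBiff _).2 ⟨w 0, rfl⟩, ?_, ?_⟩
    · rw [Sat_boxLe]
      intro y _ hyB
      rw [Sat_boxLeTail]
      intro y' hy'
      obtain ⟨x, hx⟩ := (hBiff y).1 hyB
      refine (hBiff y').2 ⟨x, ?_⟩
      rw [← tailRN_coord0 hy']
      exact hx
    · rw [Sat_boxLe]
      intro y _ hyd
      obtain ⟨y', hty', hy'B⟩ := Sat_diaLeTail.1 hyd
      obtain ⟨x, hx⟩ := (hBiff y').1 hy'B
      refine (hBiff y).2 ⟨x, ?_⟩
      rw [tailRN_coord0 hty']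
      exact hx
  have hfin := hSat0 (mkN Hs m (Sum.inl (w 0)) (fun j => w j.succ)) hAz
  have hres := (mainLem φ hvars _ (w 0) rfl).1 hfin
  erw [tailN_mkN] at hres
  rwa [mkP_eta w] at hres

end ModalProducts

/-- **Theorem 3.3.** Any product `L = T × L₂ × … × Lₙ` (with `L₂, …, Lₙ` Kripke
complete) is exponentially embeddable into its one-variable fragment: the map
`φ ↦ (A → σ(φ))` (with `A`, `σ` defined from `φ`, taking `m = maxVar φ`) sends every
formula `φ` (over the variables `p₁, p₂, …`) to a formula in the single variable `p`
such that `φ ∈ L` iff `A → σ(φ) ∈ L`, and the length of `A → σ(φ)` is bounded by an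
exponential function of the length of `φ`. -/
theorem products_with_T_theorem_3_3 (n : ℕ) (Ls : Fin n → Set (MF 1))
    (hLs : ∀ i, KripkeComplete (Ls i)) :
    ∃ c : ℕ, ∀ φ : MF (n+1), (∀ q ∈ φ.vars, 1 ≤ q) →
      (MF.imp (Af φ.maxVar φ) (sigmaT φ.maxVar φ)).vars ⊆ {0} ∧
      (φ ∈ productLogic (Fin.cases (motive := fun _ => Set (MF 1)) logicT Ls) ↔
        MF.imp (Af φ.maxVar φ) (sigmaT φ.maxVar φ) ∈
          productLogic (Fin.cases (motive := fun _ => Set (MF 1)) logicT Ls)) ∧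
      (MF.imp (Af φ.maxVar φ) (sigmaT φ.maxVar φ)).len ≤ c ^ φ.len := by
  refine ⟨1024 * (n+2)^2, ?_⟩
  intro φ hq
  refine ⟨vars_final _ φ, ⟨?_, ?_⟩, len_final φ.maxVar φ (maxVar_lt_len φ)⟩
  · exact hard_dir Ls φ φ.maxVar
  · exact easy_dir Ls φ φ.maxVar
      (fun q hq' => ⟨hq q hq', mem_vars_le_maxVar φ q hq'⟩)
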